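/- arXiv:2302.02068 — 3 statements merged into one kernel-verified Lean document; each statement's English description precedes it below -/
import Mathlib

section
/- Let L₁ and L₂ be subgroups of a free abelian group M of finite rank, and let L₁^sat and L₂^sat denote their saturations in M. Then there is a short exact sequence 0 → (L₁^sat ∩ L₂^sat)/(L₁ ∩ L₂) → L₁^sat/L₁ ⊕ L₂^sat/L₂ → (L₁^sat + L₂^sat)/(L₁ + L₂) → 0. In particular, if all quotients are finite, then |(L₁^sat + L₂^sat)/(L₁ + L₂)| · |(L₁^sat ∩ L₂^sat)/(L₁ ∩ L₂)| = |L₁^sat/L₁| · |L₂^sat/L₂|. -/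
/-- The saturation of a subgroup `L` of an abelian group `M`:
`{m ∈ M | k • m ∈ L for some nonzero k ∈ ℤ}`. -/
def saturation {M : Type*} [AddCommGroup M] (L : AddSubgroup M) : AddSubgroup M where
  carrier := {m | ∃ k : ℤ, k ≠ 0 ∧ k • m ∈ L}
  zero_mem' := ⟨1, one_ne_zero, by simpa using L.zero_mem⟩
  add_mem' := by
    rintro a b ⟨k, hk, hka⟩ ⟨l, hl, hlb⟩
    refine ⟨k * l, mul_ne_zero hk hl, ?_⟩
    rw [smul_add]
    refine L.add_mem ?_ ?_
    · rw [mul_comm, mul_smul]; exact L.zsmul_mem hka l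
    · rw [mul_smul]; exact L.zsmul_mem hlb k
  neg_mem' := by
    rintro a ⟨k, hk, hka⟩
    exact ⟨k, hk, by rw [smul_neg]; exact L.neg_mem hka⟩

open QuotientAddGroup AddSubgroup

theorem aux2 {M : Type*} [AddCommGroup M] (L₁ L₂ S₁ S₂ : AddSubgroup M)
    (h₁ : L₁ ≤ S₁) (h₂ : L₂ ≤ S₂) :
    (∃ (f : (↥(S₁ ⊓ S₂) ⧸ ((L₁ ⊓ L₂).addSubgroupOf (S₁ ⊓ S₂))) →+
            ((↥S₁ ⧸ (L₁.addSubgroupOf S₁)) × (↥S₂ ⧸ (L₂.addSubgroupOf S₂))))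
       (g : ((↥S₁ ⧸ (L₁.addSubgroupOf S₁)) × (↥S₂ ⧸ (L₂.addSubgroupOf S₂))) →+
            (↥(S₁ ⊔ S₂) ⧸ ((L₁ ⊔ L₂).addSubgroupOf (S₁ ⊔ S₂)))),
       Function.Injective f ∧ Function.Surjective g ∧ Function.Exact f g) ∧
    (Finite (↥(S₁ ⊓ S₂) ⧸ ((L₁ ⊓ L₂).addSubgroupOf (S₁ ⊓ S₂))) →
     Finite (↥S₁ ⧸ (L₁.addSubgroupOf S₁)) →
     Finite (↥S₂ ⧸ (L₂.addSubgroupOf S₂)) →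
     Finite (↥(S₁ ⊔ S₂) ⧸ ((L₁ ⊔ L₂).addSubgroupOf (S₁ ⊔ S₂))) →
     Nat.card (↥(S₁ ⊔ S₂) ⧸ ((L₁ ⊔ L₂).addSubgroupOf (S₁ ⊔ S₂))) *
       Nat.card (↥(S₁ ⊓ S₂) ⧸ ((L₁ ⊓ L₂).addSubgroupOf (S₁ ⊓ S₂))) =
     Nat.card (↥S₁ ⧸ (L₁.addSubgroupOf S₁)) * Nat.card (↥S₂ ⧸ (L₂.addSubgroupOf S₂))) := by
  -- the map f
  set φ : ↥(S₁ ⊓ S₂) →+ (↥S₁ ⧸ (L₁.addSubgroupOf S₁)) × (↥S₂ ⧸ (L₂.addSubgroupOf S₂)) :=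
    ((mk' (L₁.addSubgroupOf S₁)).comp (inclusion inf_le_left)).prod
      ((mk' (L₂.addSubgroupOf S₂)).comp (inclusion inf_le_right)) with hφ
  have hφker : ∀ x ∈ (L₁ ⊓ L₂).addSubgroupOf (S₁ ⊓ S₂), φ x = 0 := by
    rintro x hx
    have hx' : (x : M) ∈ L₁ ⊓ L₂ := hx
    have : φ x = (QuotientAddGroup.mk (inclusion inf_le_left x),
        QuotientAddGroup.mk (inclusion inf_le_right x)) := rfl
    rw [this, Prod.mk_eq_zero]
    constructor
    · rw [QuotientAddGroup.eq_zero_iff]; exact hx'.1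
    · rw [QuotientAddGroup.eq_zero_iff]; exact hx'.2
  set f := QuotientAddGroup.lift _ φ hφker with hf
  -- the maps g₁ g₂
  have hg₁ker : ∀ x ∈ L₁.addSubgroupOf S₁,
      ((mk' ((L₁ ⊔ L₂).addSubgroupOf (S₁ ⊔ S₂))).comp
        (inclusion (le_sup_left : S₁ ≤ S₁ ⊔ S₂))) x = 0 := by
    intro x hx
    rw [AddMonoidHom.comp_apply, mk'_apply, QuotientAddGroup.eq_zero_iff]
    exact (le_sup_left : L₁ ≤ L₁ ⊔ L₂) hx
  have hg₂ker : ∀ x ∈ L₂.addSubgroupOf S₂,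
      ((mk' ((L₁ ⊔ L₂).addSubgroupOf (S₁ ⊔ S₂))).comp
        (inclusion (le_sup_right : S₂ ≤ S₁ ⊔ S₂))) x = 0 := by
    intro x hx
    rw [AddMonoidHom.comp_apply, mk'_apply, QuotientAddGroup.eq_zero_iff]
    exact (le_sup_right : L₂ ≤ L₁ ⊔ L₂) hx
  set g₁ := QuotientAddGroup.lift _ _ hg₁ker with hg₁
  set g₂ := QuotientAddGroup.lift _ _ hg₂ker with hg₂
  set g := g₁.comp (AddMonoidHom.fst _ _) - g₂.comp (AddMonoidHom.snd _ _) with hg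
  have hfinj : Function.Injective f := by
    rw [injective_iff_map_eq_zero]
    intro a
    induction a using QuotientAddGroup.induction_on with
    | H x =>
      intro hx
      have hx1 : (QuotientAddGroup.mk (inclusion inf_le_left x) :
          ↥S₁ ⧸ (L₁.addSubgroupOf S₁)) = 0 := congrArg Prod.fst hx
      have hx2 : (QuotientAddGroup.mk (inclusion inf_le_right x) :
          ↥S₂ ⧸ (L₂.addSubgroupOf S₂)) = 0 := congrArg Prod.snd hx
      rw [QuotientAddGroup.eq_zero_iff] at hx1 hx2
      rw [QuotientAddGroup.eq_zero_iff]
      exact ⟨hx1, hx2⟩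
  have hgsurj : Function.Surjective g := by
    intro c
    induction c using QuotientAddGroup.induction_on with
    | H x =>
      obtain ⟨a, ha, b, hb, hab⟩ := AddSubgroup.mem_sup.mp x.2
      refine ⟨(QuotientAddGroup.mk ⟨a, ha⟩, QuotientAddGroup.mk ⟨-b, neg_mem hb⟩), ?_⟩
      have : g (QuotientAddGroup.mk ⟨a, ha⟩, QuotientAddGroup.mk ⟨-b, neg_mem hb⟩) =
          QuotientAddGroup.mk (inclusion le_sup_left ⟨a, ha⟩ -
            inclusion le_sup_right ⟨-b, neg_mem hb⟩) := rfl
      rw [this]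
      congr 1
      ext
      simp [hab]
  have hexact : Function.Exact f g := by
    intro y
    constructor
    · rcases y with ⟨y₁, y₂⟩
      induction y₁ using QuotientAddGroup.induction_on with
      | H a =>
        induction y₂ using QuotientAddGroup.induction_on with
        | H b =>
          intro hy
          have hy' : (QuotientAddGroup.mk (inclusion le_sup_left a -
              inclusion le_sup_right b) :
              ↥(S₁ ⊔ S₂) ⧸ ((L₁ ⊔ L₂).addSubgroupOf (S₁ ⊔ S₂))) = 0 := hy
          rw [QuotientAddGroup.eq_zero_iff] at hy'
          have hy'' : (a : M) - (b : M) ∈ L₁ ⊔ L₂ := hy'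
          obtain ⟨l₁, hl₁, l₂, hl₂, hl⟩ := AddSubgroup.mem_sup.mp hy''
          have hc₁ : (a : M) - l₁ ∈ S₁ := sub_mem a.2 (h₁ hl₁)
          have hc₂ : (a : M) - l₁ ∈ S₂ := by
            have ha : (a : M) = l₁ + l₂ + (b : M) := eq_add_of_sub_eq hl.symm
            have : (a : M) - l₁ = (b : M) + l₂ := by rw [ha]; abel
            rw [this]
            exact add_mem b.2 (h₂ hl₂)
          refine ⟨QuotientAddGroup.mk ⟨(a : M) - l₁, hc₁, hc₂⟩, ?_⟩
          have : f (QuotientAddGroup.mk ⟨(a : M) - l₁, hc₁, hc₂⟩) =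
              (QuotientAddGroup.mk (inclusion inf_le_left ⟨(a : M) - l₁, hc₁, hc₂⟩),
               QuotientAddGroup.mk (inclusion inf_le_right ⟨(a : M) - l₁, hc₁, hc₂⟩)) := rfl
          rw [this, Prod.ext_iff]
          constructor
          · rw [QuotientAddGroup.eq]
            show -((a : M) - l₁) + (a : M) ∈ L₁
            have : -((a : M) - l₁) + (a : M) = l₁ := by abel
            rw [this]; exact hl₁
          · rw [QuotientAddGroup.eq]
            show -((a : M) - l₁) + (b : M) ∈ L₂
            have ha : (a : M) = l₁ + l₂ + (b : M) := eq_add_of_sub_eq hl.symm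
            have : -((a : M) - l₁) + (b : M) = -l₂ := by rw [ha]; abel
            rw [this]; exact neg_mem hl₂
    · rintro ⟨x, rfl⟩
      induction x using QuotientAddGroup.induction_on with
      | H a =>
        have : g (f (QuotientAddGroup.mk a)) =
            QuotientAddGroup.mk (inclusion le_sup_left (inclusion inf_le_left a) -
              inclusion le_sup_right (inclusion inf_le_right a)) := rfl
        rw [this, QuotientAddGroup.eq_zero_iff]
        show (a : M) - (a : M) ∈ L₁ ⊔ L₂
        simp only [sub_self]
        exact zero_mem _
  refine ⟨⟨f, g, hfinj, hgsurj, hexact⟩, ?_⟩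
  intro _ _ _ _
  have hker : g.ker = f.range := (AddMonoidHom.exact_iff).mp hexact
  have h1 : Nat.card ((↥S₁ ⧸ (L₁.addSubgroupOf S₁)) × (↥S₂ ⧸ (L₂.addSubgroupOf S₂))) =
      Nat.card (_ ⧸ g.ker) * Nat.card g.ker :=
    AddSubgroup.card_eq_card_quotient_mul_card_addSubgroup g.ker
  have h2 : Nat.card (_ ⧸ g.ker) =
      Nat.card (↥(S₁ ⊔ S₂) ⧸ ((L₁ ⊔ L₂).addSubgroupOf (S₁ ⊔ S₂))) :=
    Nat.card_congr (QuotientAddGroup.quotientKerEquivOfSurjective g hgsurj).toEquiv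
  have h3 : Nat.card g.ker = Nat.card (↥(S₁ ⊓ S₂) ⧸ ((L₁ ⊓ L₂).addSubgroupOf (S₁ ⊓ S₂))) := by
    rw [hker]
    have : Nat.card f.range = Nat.card (Set.range f) := rfl
    rw [this, Nat.card_range_of_injective hfinj]
  rw [Nat.card_prod] at h1
  rw [h1, h2, h3]

/-- for subgroups `L₁, L₂` of a finite-rank free abelian group `M`, there is a
short exact sequence
`0 → (L₁ˢᵃᵗ ∩ L₂ˢᵃᵗ)/(L₁ ∩ L₂) → L₁ˢᵃᵗ/L₁ ⊕ L₂ˢᵃᵗ/L₂ → (L₁ˢᵃᵗ + L₂ˢᵃᵗ)/(L₁ + L₂) → 0`;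
in particular, if all four quotients are finite,
`|(L₁ˢᵃᵗ+L₂ˢᵃᵗ)/(L₁+L₂)| * |(L₁ˢᵃᵗ∩L₂ˢᵃᵗ)/(L₁∩L₂)| = |L₁ˢᵃᵗ/L₁| * |L₂ˢᵃᵗ/L₂|`. -/
theorem stmt2 (M : Type*) [AddCommGroup M] [Module.Free ℤ M] [Module.Finite ℤ M]
    (L₁ L₂ : AddSubgroup M) :
    (∃ (f : (↥(saturation L₁ ⊓ saturation L₂) ⧸
              ((L₁ ⊓ L₂).addSubgroupOf (saturation L₁ ⊓ saturation L₂))) →+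
            ((↥(saturation L₁) ⧸ (L₁.addSubgroupOf (saturation L₁))) ×
             (↥(saturation L₂) ⧸ (L₂.addSubgroupOf (saturation L₂)))))
       (g : ((↥(saturation L₁) ⧸ (L₁.addSubgroupOf (saturation L₁))) ×
             (↥(saturation L₂) ⧸ (L₂.addSubgroupOf (saturation L₂)))) →+
            (↥(saturation L₁ ⊔ saturation L₂) ⧸
              ((L₁ ⊔ L₂).addSubgroupOf (saturation L₁ ⊔ saturation L₂)))),
       Function.Injective f ∧ Function.Surjective g ∧ Function.Exact f g) ∧
    (Finite (↥(saturation L₁ ⊓ saturation L₂) ⧸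
        ((L₁ ⊓ L₂).addSubgroupOf (saturation L₁ ⊓ saturation L₂))) →
     Finite (↥(saturation L₁) ⧸ (L₁.addSubgroupOf (saturation L₁))) →
     Finite (↥(saturation L₂) ⧸ (L₂.addSubgroupOf (saturation L₂))) →
     Finite (↥(saturation L₁ ⊔ saturation L₂) ⧸
        ((L₁ ⊔ L₂).addSubgroupOf (saturation L₁ ⊔ saturation L₂))) →
     Nat.card (↥(saturation L₁ ⊔ saturation L₂) ⧸
         ((L₁ ⊔ L₂).addSubgroupOf (saturation L₁ ⊔ saturation L₂))) *
       Nat.card (↥(saturation L₁ ⊓ saturation L₂) ⧸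
         ((L₁ ⊓ L₂).addSubgroupOf (saturation L₁ ⊓ saturation L₂))) =
     Nat.card (↥(saturation L₁) ⧸ (L₁.addSubgroupOf (saturation L₁))) *
       Nat.card (↥(saturation L₂) ⧸ (L₂.addSubgroupOf (saturation L₂)))) := by
  exact aux2 L₁ L₂ (saturation L₁) (saturation L₂)
    (fun x hx => ⟨1, one_ne_zero, by simpa using hx⟩)
    (fun x hx => ⟨1, one_ne_zero, by simpa using hx⟩)
end

section
/- Let M be a free abelian group of rank d, and L₁, L₂ ⊆ M subgroups of rank d−1 with rank(L₁+L₂) = d. With M̄ = M/(L₁^sat ∩ L₂^sat) a rank-2 free abelian group, and ū₁, ū₂ ∈ M̄ nonzero elements lying in the rank-1 subgroups (L₁^sat)/(L₁^sat∩L₂^sat) and (L₂^sat)/(L₁^sat∩L₂^sat) respectively, one has |M/(L₁^sat + L₂^sat)| = |ū₁ ∧ ū₂| / (|ū₁| · |ū₂|), where ū₁ ∧ ū₂ is the determinant in M̄ ≅ ℤ² and |·| denotes divisibility. -/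
/-- The divisibility of an element `x` of an abelian group: the largest `n : ℕ` such that
`x = n • y` for some `y` (via `sSup`). -/
noncomputable def divisib {M : Type*} [AddCommGroup M] (x : M) : ℕ :=
  sSup {n : ℕ | ∃ y : M, x = (n : ℤ) • y}

/-- 2x2 determinant of a pair of vectors in `Fin 2 → ℤ`. -/
def det2 (x y : Fin 2 → ℤ) : ℤ := x 0 * y 1 - x 1 * y 0

lemma det2_smul_left (k : ℤ) (x y : Fin 2 → ℤ) : det2 (k • x) y = k * det2 x y := by
  simp [det2]; ring

lemma det2_smul_right (k : ℤ) (x y : Fin 2 → ℤ) : det2 x (k • y) = k * det2 x y := by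
  simp [det2]; ring

/-- Cramer-type identity: if `det2 v w = 1` then any `x` decomposes. -/
lemma cramer2 {v w : Fin 2 → ℤ} (h : det2 v w = 1) (x : Fin 2 → ℤ) :
    (det2 x w) • v + (det2 v x) • w = x := by
  have h' : v 0 * w 1 - v 1 * w 0 = 1 := h
  funext i
  fin_cases i
  · show (det2 x w) * v 0 + (det2 v x) * w 0 = x 0
    simp only [det2]
    linear_combination (x 0) * h'
  · show (det2 x w) * v 1 + (det2 v x) * w 1 = x 1
    simp only [det2]
    linear_combination (x 1) * h'

/-- the index of the subgroup generated by `v` and `α•v+β•w`, where `det2 v w = 1`. -/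
lemma index_span_pair {v w : Fin 2 → ℤ} (h : det2 v w = 1) (α β : ℤ) :
    (Submodule.span ℤ ({v, α • v + β • w} : Set (Fin 2 → ℤ))).toAddSubgroup.index
      = β.natAbs := by
  set f : (Fin 2 → ℤ) →+ ℤ := AddMonoidHom.mk' (fun x => det2 v x) (by
    intro a b; simp [det2]; ring) with hf
  set ψ : (Fin 2 → ℤ) →+ ZMod β.natAbs := (Int.castAddHom (ZMod β.natAbs)).comp f with hψ
  have hψs : Function.Surjective ψ := by
    intro t
    obtain ⟨n, rfl⟩ := ZMod.intCast_surjective t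
    refine ⟨n • w, ?_⟩
    show ((det2 v (n • w) : ℤ) : ZMod β.natAbs) = (n : ZMod β.natAbs)
    rw [det2_smul_right, h, mul_one]
  have hker : ψ.ker = (Submodule.span ℤ ({v, α • v + β • w} : Set (Fin 2 → ℤ))).toAddSubgroup := by
    ext x
    simp only [AddMonoidHom.mem_ker, hψ, AddMonoidHom.coe_comp, Function.comp_apply,
      Int.coe_castAddHom, Submodule.mem_toAddSubgroup, Submodule.mem_span_pair]
    rw [ZMod.intCast_zmod_eq_zero_iff_dvd, Int.natAbs_dvd]
    constructor
    · rintro ⟨k, hk⟩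
      refine ⟨det2 x w - k * α, k, ?_⟩
      rw [show f x = det2 v x from rfl] at hk
      have heq : (det2 x w - k * α) • v + k • (α • v + β • w)
          = det2 x w • v + det2 v x • w := by
        funext i
        simp only [Pi.add_apply, Pi.smul_apply, smul_eq_mul]
        rw [hk]; ring
      rw [heq, cramer2 h x]
    · rintro ⟨a, c, rfl⟩
      refine ⟨c, ?_⟩
      have h' : v 0 * w 1 - v 1 * w 0 = 1 := h
      show det2 v _ = _
      simp only [det2, Pi.add_apply, Pi.smul_apply, smul_eq_mul]
      linear_combination c * β * h'
  rw [← hker, AddSubgroup.index_ker ψ, AddMonoidHom.range_eq_top_of_surjective ψ hψs,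
    Nat.card_congr AddSubgroup.topEquiv.toEquiv, Nat.card_zmod]


lemma fin2_ne_zero {x : Fin 2 → ℤ} (hx : x ≠ 0) : x 0 ≠ 0 ∨ x 1 ≠ 0 := by
  by_contra hc
  push_neg at hc
  exact hx (funext fun i => by fin_cases i <;> simp [hc.1, hc.2])

lemma mem_div_set_iff (x : Fin 2 → ℤ) (n : ℕ) :
    (∃ z : Fin 2 → ℤ, x = (n : ℤ) • z) ↔ n ∣ Int.gcd (x 0) (x 1) := by
  constructor
  · rintro ⟨z, hz⟩
    have h0 : (n : ℤ) ∣ x 0 := ⟨z 0, by rw [hz]; simp⟩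
    have h1 : (n : ℤ) ∣ x 1 := ⟨z 1, by rw [hz]; simp⟩
    exact Int.natCast_dvd_natCast.mp (Int.dvd_coe_gcd h0 h1)
  · intro hn
    have hdvd : ∀ i : Fin 2, (n : ℤ) ∣ x i := by
      intro i
      have hng : (n : ℤ) ∣ (Int.gcd (x 0) (x 1) : ℤ) := Int.natCast_dvd_natCast.mpr hn
      fin_cases i
      · exact hng.trans (Int.gcd_dvd_left _ _)
      · exact hng.trans (Int.gcd_dvd_right _ _)
    exact ⟨fun i => x i / (n : ℤ), funext fun i => by
      rw [Pi.smul_apply, smul_eq_mul, Int.mul_ediv_cancel' (hdvd i)]⟩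

lemma sSup_eq_gcd (x : Fin 2 → ℤ) (hx : x ≠ 0) :
    sSup {n : ℕ | ∃ z : Fin 2 → ℤ, x = (n : ℤ) • z} = Int.gcd (x 0) (x 1) := by
  set g := Int.gcd (x 0) (x 1) with hgdef
  have hg : 0 < g := Int.gcd_pos_iff.mpr (fin2_ne_zero hx)
  have hset : {n : ℕ | ∃ z : Fin 2 → ℤ, x = (n : ℤ) • z} = {n : ℕ | n ∣ g} := by
    ext n; exact mem_div_set_iff x n
  rw [hset]
  apply le_antisymm
  · exact csSup_le ⟨1, one_dvd g⟩ fun n hn => Nat.le_of_dvd hg hn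
  · exact le_csSup ⟨g, fun n hn => Nat.le_of_dvd hg hn⟩ dvd_rfl

lemma W_eq_span (W : AddSubgroup (Fin 2 → ℤ)) (x : Fin 2 → ℤ) (hxW : x ∈ W) (hx : x ≠ 0)
    (hsat : ∀ (k : ℤ) (y : Fin 2 → ℤ), k ≠ 0 → k • y ∈ W → y ∈ W)
    (hcol : ∀ y ∈ W, det2 y x = 0) :
    ∃ v : Fin 2 → ℤ, Int.gcd (v 0) (v 1) = 1 ∧ (Int.gcd (x 0) (x 1) : ℤ) • v = x ∧
      W = (Submodule.span ℤ ({v} : Set (Fin 2 → ℤ))).toAddSubgroup := by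
  set g := Int.gcd (x 0) (x 1) with hgdef
  have hg : 0 < g := Int.gcd_pos_iff.mpr (fin2_ne_zero hx)
  have hgz : (g : ℤ) ≠ 0 := Int.natCast_ne_zero.mpr hg.ne'
  set v : Fin 2 → ℤ := fun i => x i / (g : ℤ) with hvdef
  have hgv : (g : ℤ) • v = x := by
    funext i
    rw [Pi.smul_apply, smul_eq_mul, hvdef]
    fin_cases i
    · exact Int.mul_ediv_cancel' (Int.gcd_dvd_left _ _)
    · exact Int.mul_ediv_cancel' (Int.gcd_dvd_right _ _)
  have hprim : Int.gcd (v 0) (v 1) = 1 := by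
    have h1 : Int.gcd ((g : ℤ) * v 0) ((g : ℤ) * v 1) = g := by
      have h0 : (g : ℤ) * v 0 = x 0 := by rw [← hgv]; simp
      have h1' : (g : ℤ) * v 1 = x 1 := by rw [← hgv]; simp
      rw [h0, h1']
    rw [Int.gcd_mul_left] at h1
    simp only [Int.natAbs_natCast] at h1
    exact Nat.eq_of_mul_eq_mul_left hg (by rw [h1, mul_one])
  have hvW : v ∈ W := hsat (g : ℤ) v hgz (by rw [hgv]; exact hxW)
  refine ⟨v, hprim, hgv, ?_⟩
  apply le_antisymm
  · intro y hy
    have hdx : det2 y x = 0 := hcol y hy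
    have hdv : det2 y v = 0 := by
      have : (g : ℤ) * det2 y v = 0 := by
        rw [← hdx, ← hgv]; simp [det2]; ring
      exact (mul_eq_zero.mp this).resolve_left hgz
    obtain ⟨a, b, hb⟩ : IsCoprime (v 0) (v 1) := Int.isCoprime_iff_gcd_eq_one.mpr hprim
    have hd' : y 0 * v 1 - y 1 * v 0 = 0 := hdv
    refine Submodule.mem_toAddSubgroup _ |>.mpr <| Submodule.mem_span_singleton.mpr
      ⟨a * y 0 + b * y 1, ?_⟩
    funext i
    rw [Pi.smul_apply, smul_eq_mul]
    fin_cases i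
    · show (a * y 0 + b * y 1) * v 0 = y 0
      linear_combination y 0 * hb - b * hd'
    · show (a * y 0 + b * y 1) * v 1 = y 1
      linear_combination y 1 * hb + a * hd'
  · intro y hy
    obtain ⟨c, rfl⟩ := Submodule.mem_span_singleton.mp (Submodule.mem_toAddSubgroup _ |>.mp hy)
    exact AddSubgroup.zsmul_mem W hvW c

lemma not_sat_top {M : Type*} [AddCommGroup M] [Module ℤ M] [Module.Free ℤ M]
    [Module.Finite ℤ M] {d : ℕ} (hd : 2 ≤ d) (hrank : Module.finrank ℤ M = d)
    (L : Submodule ℤ M) (hL : Module.finrank ℤ ↥L = d - 1)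
    (hfull : ∀ m : M, ∃ k : ℤ, k ≠ 0 ∧ k • m ∈ L) : False := by
  classical
  haveI : IsNoetherian ℤ M := isNoetherian_of_isNoetherianRing_of_finite ℤ M
  haveI : Module.Finite ℤ ↥L := by
    letI := AddCommGroup.uniqueIntModule (M := ↥L)
    have h := Module.Finite.iff_fg.mpr (IsNoetherian.noetherian L)
    convert h using 2
    exact Subsingleton.elim _ _
  have smul_eq := fun (n : ℤ) (m : M) => Int.cast_smul_eq_zsmul ℤ n m
  simp only [Int.cast_id] at smul_eq
  let βM := Module.Free.chooseBasis ℤ M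
  choose k hk hkL using fun i => hfull (βM i)
  let w : Module.Free.ChooseBasisIndex ℤ M → ↥L := fun i => ⟨k i • βM i, hkL i⟩
  have hwin : LinearIndependent ℤ w := by
    rw [linearIndependent_iff']
    intro s g hsum i hi
    have hc : ∑ j ∈ s, g j • (k j • βM j) = 0 := by
      have h2 := congrArg (Subtype.val) hsum
      rw [AddSubmonoidClass.coe_finset_sum] at h2
      simpa [w] using h2
    simp only [← smul_eq, smul_smul] at hc
    have h2 := linearIndependent_iff'.mp βM.linearIndependent s (fun j => g j * k j) (by simpa only [mul_smul, smul_eq] using hc) i hi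
    exact (mul_eq_zero.mp h2).resolve_right (hk i)
  have hcard := hwin.fintype_card_le_finrank
  rw [hL] at hcard
  have hdd : Fintype.card (Module.Free.ChooseBasisIndex ℤ M) = d := by
    rw [← hrank, Module.finrank_eq_card_chooseBasisIndex]
  omega

/-- let `M` be free abelian of rank `d`, `L₁, L₂ ⊆ M` of rank `d−1` with
`rank(L₁+L₂) = d`.  With `M̄ = M/(L₁ˢᵃᵗ ∩ L₂ˢᵃᵗ)` free of rank 2, and nonzero elements
`ū₁, ū₂ ∈ M̄` lying in the images of `L₁ˢᵃᵗ` and `L₂ˢᵃᵗ` respectively, one has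
`|M/(L₁ˢᵃᵗ + L₂ˢᵃᵗ)| = |ū₁ ∧ ū₂| / (|ū₁| · |ū₂|)` (stated multiplicatively), where the
determinant `ū₁ ∧ ū₂` is computed in any `ℤ`-basis of `M̄ ≅ ℤ²` and `|·|` denotes the
divisibility. -/
theorem stmt8 (M : Type*) [AddCommGroup M] [Module ℤ M]
    [Module.Free ℤ M] [Module.Finite ℤ M]
    (d : ℕ) (hd : 2 ≤ d) (hrank : Module.finrank ℤ M = d)
    (L₁ L₂ : Submodule ℤ M)
    (h₁ : Module.finrank ℤ ↥L₁ = d - 1) (h₂ : Module.finrank ℤ ↥L₂ = d - 1)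
    (hsum : Module.finrank ℤ ↥(L₁ ⊔ L₂) = d)
    (u₁ u₂ : M)
    (hu₁ : u₁ ∈ saturation L₁.toAddSubgroup) (hu₂ : u₂ ∈ saturation L₂.toAddSubgroup)
    (hq₁ : (QuotientAddGroup.mk
        (s := saturation L₁.toAddSubgroup ⊓ saturation L₂.toAddSubgroup) u₁) ≠ 0)
    (hq₂ : (QuotientAddGroup.mk
        (s := saturation L₁.toAddSubgroup ⊓ saturation L₂.toAddSubgroup) u₂) ≠ 0)
    (b : Module.Basis (Fin 2) ℤ
        (M ⧸ (saturation L₁.toAddSubgroup ⊓ saturation L₂.toAddSubgroup))) :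
    (saturation L₁.toAddSubgroup ⊔ saturation L₂.toAddSubgroup).index *
      (divisib (QuotientAddGroup.mk
          (s := saturation L₁.toAddSubgroup ⊓ saturation L₂.toAddSubgroup) u₁) *
       divisib (QuotientAddGroup.mk
          (s := saturation L₁.toAddSubgroup ⊓ saturation L₂.toAddSubgroup) u₂)) =
    (b.repr (QuotientAddGroup.mk u₁) 0 * b.repr (QuotientAddGroup.mk u₂) 1 -
     b.repr (QuotientAddGroup.mk u₁) 1 * b.repr (QuotientAddGroup.mk u₂) 0).natAbs := by
  classical
  set c := b.equivFun with hc
  set π := QuotientAddGroup.mk' (saturation L₁.toAddSubgroup ⊓ saturation L₂.toAddSubgroup) with hπ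
  set φ : M →+ (Fin 2 → ℤ) := c.toLinearMap.toAddMonoidHom.comp π with hφ
  have hφapp : ∀ m : M, φ m = c (QuotientAddGroup.mk (s := (saturation L₁.toAddSubgroup ⊓ saturation L₂.toAddSubgroup)) m) := fun m => by
    rw [hφ, hπ]; rfl
  have hφs : Function.Surjective φ := by
    intro y
    obtain ⟨q, hq⟩ := c.surjective y
    obtain ⟨m, rfl⟩ := QuotientAddGroup.mk'_surjective (saturation L₁.toAddSubgroup ⊓ saturation L₂.toAddSubgroup) q
    exact ⟨m, by rw [hφapp m]; exact hq⟩
  have hker : ∀ m : M, φ m = 0 → m ∈ (saturation L₁.toAddSubgroup ⊓ saturation L₂.toAddSubgroup) := by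
    intro m h
    have h0 : (QuotientAddGroup.mk (s := (saturation L₁.toAddSubgroup ⊓ saturation L₂.toAddSubgroup)) m) = 0 := by
      apply c.injective
      rw [map_zero, ← hφapp m]; exact h
    exact (QuotientAddGroup.eq_zero_iff m).mp h0
  -- the per-side analysis
  have side : ∀ (L : Submodule ℤ M), Module.finrank ℤ ↥L = d - 1 →
      (saturation L₁.toAddSubgroup ⊓ saturation L₂.toAddSubgroup) ≤ saturation L.toAddSubgroup → ∀ u : M, u ∈ saturation L.toAddSubgroup → φ u ≠ 0 →
      ∃ v : Fin 2 → ℤ, Int.gcd (v 0) (v 1) = 1 ∧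
        (Int.gcd (φ u 0) (φ u 1) : ℤ) • v = φ u ∧
        (saturation L.toAddSubgroup).map φ = (Submodule.span ℤ ({v} : Set (Fin 2 → ℤ))).toAddSubgroup := by
    intro L hL hKL u hu hx
    set S := saturation L.toAddSubgroup with hS
    set W := S.map φ with hW
    have hxW : φ u ∈ W := ⟨u, hu, rfl⟩
    have key : ∀ (m : M) (k : ℤ), k ≠ 0 → φ (k • m) ∈ W → m ∈ S := by
      rintro m k hk ⟨s, hsS, hs⟩
      have hmem : k • m - s ∈ (saturation L₁.toAddSubgroup ⊓ saturation L₂.toAddSubgroup) := hker _ (by rw [map_sub, hs, sub_self])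
      have hkm : k • m ∈ S := by
        rw [← sub_add_cancel (k • m) s]
        exact S.add_mem (hKL hmem) hsS
      obtain ⟨j, hj, hjL⟩ := hkm
      exact ⟨j * k, mul_ne_zero hj hk, by rwa [mul_zsmul]⟩
    have hWsat : ∀ (k : ℤ) (y : Fin 2 → ℤ), k ≠ 0 → k • y ∈ W → y ∈ W := by
      intro k y hk hky
      obtain ⟨m, rfl⟩ := hφs y
      have : φ (k • m) ∈ W := by rw [map_zsmul]; exact hky
      exact ⟨m, key m k hk this, rfl⟩
    have hWcol : ∀ y ∈ W, det2 y (φ u) = 0 := by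
      by_contra hcon
      push_neg at hcon
      obtain ⟨y, hyW, hdet⟩ := hcon
      refine not_sat_top hd hrank L hL ?_
      intro m
      have hm : φ ((det2 y (φ u)) • m) ∈ W := by
        rw [map_zsmul]
        have hid : det2 y (φ u) • φ m
            = (det2 (φ m) (φ u)) • y - (det2 (φ m) y) • (φ u) := by
          funext i
          fin_cases i <;>
            · simp only [Fin.mk_zero, Fin.mk_one, Pi.sub_apply, Pi.smul_apply, smul_eq_mul,
                det2, Fin.isValue]
              ring
        rw [hid]
        exact W.sub_mem (W.zsmul_mem hyW _) (W.zsmul_mem hxW _)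
      obtain ⟨j, hj, hjL⟩ := key m _ hdet hm
      exact ⟨j, hj, hjL⟩
    exact W_eq_span W (φ u) hxW hx hWsat hWcol
  -- nonvanishing of the coordinates
  have hx₁ : φ u₁ ≠ 0 := fun h => hq₁ (by
    apply c.injective; rw [map_zero, ← hφapp u₁]; exact h)
  have hx₂ : φ u₂ ≠ 0 := fun h => hq₂ (by
    apply c.injective; rw [map_zero, ← hφapp u₂]; exact h)
  obtain ⟨v₁, hv₁prim, hgv₁, hW₁⟩ := side L₁ h₁ inf_le_left u₁ hu₁ hx₁
  obtain ⟨v₂, hv₂prim, hgv₂, hW₂⟩ := side L₂ h₂ inf_le_right u₂ hu₂ hx₂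
  set g₁ := Int.gcd (φ u₁ 0) (φ u₁ 1) with hg₁
  set g₂ := Int.gcd (φ u₂ 0) (φ u₂ 1) with hg₂
  -- divisibility computation
  have hdiv : ∀ u : M, φ u ≠ 0 →
      divisib (QuotientAddGroup.mk (s := (saturation L₁.toAddSubgroup ⊓ saturation L₂.toAddSubgroup)) u) = Int.gcd (φ u 0) (φ u 1) := by
    intro u hxu
    have hsets : {n : ℕ | ∃ y : M ⧸ (saturation L₁.toAddSubgroup ⊓ saturation L₂.toAddSubgroup), (QuotientAddGroup.mk (s := (saturation L₁.toAddSubgroup ⊓ saturation L₂.toAddSubgroup)) u) = (n : ℤ) • y}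
        = {n : ℕ | ∃ z : Fin 2 → ℤ, φ u = (n : ℤ) • z} := by
      ext n
      constructor
      · rintro ⟨y, hy⟩
        exact ⟨c y, by rw [hφapp, hy, map_zsmul]⟩
      · rintro ⟨z, hz⟩
        refine ⟨c.symm z, ?_⟩
        apply c.injective
        rw [map_zsmul, c.apply_symm_apply, ← hφapp u]
        exact hz
    rw [divisib, hsets, sSup_eq_gcd _ hxu]
  -- index computation
  have hindex : (saturation L₁.toAddSubgroup ⊔ saturation L₂.toAddSubgroup).index
      = (Submodule.span ℤ ({v₁, v₂} : Set (Fin 2 → ℤ))).toAddSubgroup.index := by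
    have hker_le : φ.ker ≤ saturation L₁.toAddSubgroup ⊔ saturation L₂.toAddSubgroup := by
      intro m hm
      exact AddSubgroup.mem_sup_left ((AddSubgroup.mem_inf.mp (hker m hm)).1)
    rw [← AddSubgroup.index_map_eq _ hφs hker_le, AddSubgroup.map_sup, hW₁, hW₂]
    congr 1
    rw [Submodule.span_insert]
    apply le_antisymm
    · apply sup_le
      · exact fun y hy => (Submodule.mem_toAddSubgroup _).mpr
          (Submodule.mem_sup_left ((Submodule.mem_toAddSubgroup _).mp hy))
      · exact fun y hy => (Submodule.mem_toAddSubgroup _).mpr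
          (Submodule.mem_sup_right ((Submodule.mem_toAddSubgroup _).mp hy))
    · intro y hy
      rw [Submodule.mem_toAddSubgroup, Submodule.mem_sup] at hy
      obtain ⟨a, ha, b', hb', rfl⟩ := hy
      exact AddSubgroup.add_mem _
        (AddSubgroup.mem_sup_left ((Submodule.mem_toAddSubgroup _).mpr ha))
        (AddSubgroup.mem_sup_right ((Submodule.mem_toAddSubgroup _).mpr hb'))
  -- build the unimodular complement of v₁
  obtain ⟨a, bz, hab⟩ : IsCoprime (v₁ 0) (v₁ 1) := Int.isCoprime_iff_gcd_eq_one.mpr hv₁prim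
  set w : Fin 2 → ℤ := ![-bz, a] with hwdef
  have hvw : det2 v₁ w = 1 := by
    show v₁ 0 * w 1 - v₁ 1 * w 0 = 1
    simp only [hwdef]
    show v₁ 0 * a - v₁ 1 * (-bz) = 1
    linear_combination hab
  have hv₂eq : v₂ = (det2 v₂ w) • v₁ + (det2 v₁ v₂) • w := (cramer2 hvw v₂).symm
  have hidx2 : (Submodule.span ℤ ({v₁, v₂} : Set (Fin 2 → ℤ))).toAddSubgroup.index
      = (det2 v₁ v₂).natAbs := by
    rw [show ({v₁, v₂} : Set (Fin 2 → ℤ)) = {v₁, (det2 v₂ w) • v₁ + (det2 v₁ v₂) • w} by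
      rw [← hv₂eq]]
    exact index_span_pair hvw _ _
  -- determinant factorization
  have hdetfac : det2 (φ u₁) (φ u₂) = (g₁ : ℤ) * ((g₂ : ℤ) * det2 v₁ v₂) := by
    rw [← hgv₁, ← hgv₂, det2_smul_left, det2_smul_right]
  -- final computation
  have hrepr : ∀ (u : M) (i : Fin 2), b.repr (QuotientAddGroup.mk (s := (saturation L₁.toAddSubgroup ⊓ saturation L₂.toAddSubgroup)) u) i = φ u i := by
    intro u i
    rw [hφapp, hc, Module.Basis.equivFun_apply]
  rw [hdiv u₁ hx₁, hdiv u₂ hx₂, hindex, hidx2]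
  rw [show (b.repr (QuotientAddGroup.mk u₁) 0 * b.repr (QuotientAddGroup.mk u₂) 1 -
      b.repr (QuotientAddGroup.mk u₁) 1 * b.repr (QuotientAddGroup.mk u₂) 0)
      = det2 (φ u₁) (φ u₂) by
    rw [det2, hrepr u₁ 0, hrepr u₁ 1, hrepr u₂ 0, hrepr u₂ 1]]
  rw [hdetfac, Int.natAbs_mul, Int.natAbs_mul, Int.natAbs_natCast, Int.natAbs_natCast]
  ring
end

section
/- Let P be a k-dimensional convex polyhedron in ℝⁿ. Then there exists a finite polyhedral decomposition 𝒫 of ℝⁿ (a finite covering by strongly convex polyhedra such that faces of cells are cells and intersections of two cells are common faces) such that P is a union of k-dimensional cells of 𝒫. -/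
open Set

/-- A (convex) polyhedron in `ℝⁿ`: an intersection of finitely many affine half-spaces. -/
def IsPolyhedron {n : ℕ} (P : Set (Fin n → ℝ)) : Prop :=
  ∃ (k : ℕ) (f : Fin k → ((Fin n → ℝ) →ₗ[ℝ] ℝ)) (c : Fin k → ℝ),
    P = {x | ∀ i, f i x ≤ c i}

/-- `F` is a face of `P`: the locus where an affine functional bounded above on `P`
attains its maximum value. -/
def IsFaceOf {n : ℕ} (F P : Set (Fin n → ℝ)) : Prop :=
  ∃ (f : (Fin n → ℝ) →ₗ[ℝ] ℝ) (c : ℝ), (∀ x ∈ P, f x ≤ c) ∧ F = {x ∈ P | f x = c}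

/-- A strongly convex set: one containing no affine line. -/
def StronglyConvex {n : ℕ} (P : Set (Fin n → ℝ)) : Prop :=
  ∀ x v : Fin n → ℝ, v ≠ 0 → ¬ (∀ t : ℝ, x + t • v ∈ P)

/-- The dimension of a subset of `ℝⁿ`: the dimension of the direction of its affine span. -/
noncomputable def polyDim {n : ℕ} (P : Set (Fin n → ℝ)) : ℕ :=
  Module.finrank ℝ (affineSpan ℝ P).direction

namespace Stmt12
set_option linter.unusedSectionVars false

/-- Relation dictated by an ordering symbol. -/
def Ord (o : Ordering) (a b : ℝ) : Prop :=
  match o with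
  | .lt => a ≤ b
  | .eq => a = b
  | .gt => b ≤ a

lemma ord_self (o : Ordering) (a : ℝ) : Ord o a a := by
  cases o <;> simp [Ord]

lemma ord_of_eq (o : Ordering) {a b : ℝ} (h : a = b) : Ord o a b := by
  cases o <;> simp [Ord, h]

lemma eq_of_ord_ne {o o' : Ordering} {a b : ℝ} (hne : o ≠ o')
    (h : Ord o a b) (h' : Ord o' a b) : a = b := by
  cases o <;> cases o' <;> simp_all [Ord] <;> linarith

/-- Real sign of an ordering symbol. -/
noncomputable def sgn (o : Ordering) : ℝ :=
  match o with
  | .lt => 1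
  | .eq => 0
  | .gt => -1

lemma sgn_inj {o o' : Ordering} (h : sgn o = sgn o') : o = o' := by
  cases o <;> cases o' <;> simp_all [sgn] <;> linarith

lemma ord_combo {o : Ordering} {x y b : ℝ} {s t : ℝ} (hs : 0 ≤ s) (ht : 0 ≤ t)
    (hst : s + t = 1) (hx : Ord o x b) (hy : Ord o y b) : Ord o (s * x + t * y) b := by
  cases o with
  | lt =>
      have h1 : s * x ≤ s * b := mul_le_mul_of_nonneg_left hx hs
      have h2 : t * y ≤ t * b := mul_le_mul_of_nonneg_left hy ht
      show s * x + t * y ≤ b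
      calc s * x + t * y ≤ s * b + t * b := add_le_add h1 h2
        _ = b := by rw [← add_mul, hst, one_mul]
  | eq =>
      show s * x + t * y = b
      rw [hx, hy, ← add_mul, hst, one_mul]
  | gt =>
      have h1 : s * b ≤ s * x := mul_le_mul_of_nonneg_left hx hs
      have h2 : t * b ≤ t * y := mul_le_mul_of_nonneg_left hy ht
      show b ≤ s * x + t * y
      calc b = s * b + t * b := by rw [← add_mul, hst, one_mul]
        _ ≤ s * x + t * y := add_le_add h1 h2

variable {n : ℕ} {ι : Type} [Fintype ι]

variable (A : ι → ((Fin n → ℝ) →ₗ[ℝ] ℝ)) (b : ι → ℝ)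

/-- The closed cell of the hyperplane arrangement with sign vector `σ`. -/
def cell (σ : ι → Ordering) : Set (Fin n → ℝ) := {x | ∀ i, Ord (σ i) (A i x) (b i)}

/-- The sign vector of a point. -/
noncomputable def sv (x : Fin n → ℝ) (i : ι) : Ordering :=
  if A i x < b i then .lt else if A i x = b i then .eq else .gt

lemma mem_cell_sv (x : Fin n → ℝ) : x ∈ cell A b (sv A b x) := by
  intro i
  unfold sv
  split_ifs with h1 h2
  · exact le_of_lt h1
  · exact h2
  · exact le_of_not_gt (by intro h; rcases lt_or_eq_of_le (le_of_lt h) with h' | h' <;> simp_all)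

lemma sv_eq_lt {x : Fin n → ℝ} {i : ι} (h : A i x < b i) : sv A b x i = .lt := by
  simp [sv, h]

lemma sv_eq_eq {x : Fin n → ℝ} {i : ι} (h : A i x = b i) : sv A b x i = .eq := by
  simp [sv, h]

lemma sv_eq_gt {x : Fin n → ℝ} {i : ι} (h : b i < A i x) : sv A b x i = .gt := by
  simp [sv, not_lt_of_gt h, ne_of_gt h, lt_irrefl]

lemma sv_lt_iff {x : Fin n → ℝ} {i : ι} : sv A b x i = .lt ↔ A i x < b i := by
  rcases lt_trichotomy (A i x) (b i) with h | h | h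
  · simp [sv_eq_lt A b h, h]
  · simp [sv_eq_eq A b h, h]
  · simp [sv_eq_gt A b h, not_lt_of_gt h]

lemma sv_eq_iff {x : Fin n → ℝ} {i : ι} : sv A b x i = .eq ↔ A i x = b i := by
  rcases lt_trichotomy (A i x) (b i) with h | h | h
  · simp [sv_eq_lt A b h, ne_of_lt h]
  · simp [sv_eq_eq A b h, h]
  · simp [sv_eq_gt A b h, ne_of_gt h]

lemma sv_gt_iff {x : Fin n → ℝ} {i : ι} : sv A b x i = .gt ↔ b i < A i x := by
  rcases lt_trichotomy (A i x) (b i) with h | h | h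
  · simp [sv_eq_lt A b h, not_lt_of_gt h]
  · simp [sv_eq_eq A b h, h, lt_irrefl]
  · simp [sv_eq_gt A b h, h]

lemma convex_cell (σ : ι → Ordering) : Convex ℝ (cell A b σ) := by
  intro x hx y hy s t hs ht hst
  intro i
  have := ord_combo (o := σ i) (x := A i x) (y := A i y) (b := b i) hs ht hst (hx i) (hy i)
  simpa [map_add, map_smul, smul_eq_mul] using this

lemma isPolyhedron_of_fintype {κ : Type} [Fintype κ] (g : κ → ((Fin n → ℝ) →ₗ[ℝ] ℝ))
    (d : κ → ℝ) : IsPolyhedron {x | ∀ i, g i x ≤ d i} := by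
  refine ⟨Fintype.card κ, fun j => g ((Fintype.equivFin κ).symm j),
    fun j => d ((Fintype.equivFin κ).symm j), ?_⟩
  ext x
  constructor
  · intro hx j; exact hx _
  · intro hx i
    have := hx (Fintype.equivFin κ i)
    simpa using this

lemma isPolyhedron_empty : IsPolyhedron (∅ : Set (Fin n → ℝ)) := by
  refine ⟨1, fun _ => 0, fun _ => -1, ?_⟩
  ext x
  simp only [Set.mem_empty_iff_false, Set.mem_setOf_eq, false_iff, not_forall, not_le]
  exact ⟨0, by norm_num⟩

lemma isPolyhedron_cell (σ : ι → Ordering) : IsPolyhedron (cell A b σ) := by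
  classical
  have key : cell A b σ = {x | ∀ p : ι × Bool,
      (if p.2 then (match σ p.1 with
        | .lt => (0 : (Fin n → ℝ) →ₗ[ℝ] ℝ) | .eq => -(A p.1) | .gt => 0)
       else (match σ p.1 with
        | .lt => A p.1 | .eq => A p.1 | .gt => -(A p.1))) x ≤
      (if p.2 then (match σ p.1 with
        | .lt => (0:ℝ) | .eq => -(b p.1) | .gt => 0)
       else (match σ p.1 with
        | .lt => b p.1 | .eq => b p.1 | .gt => -(b p.1)))} := by
    ext x
    constructor
    · intro hx p
      have h := hx p.1
      rcases p with ⟨i, bo⟩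
      cases hσ : σ i <;> rw [hσ] at h <;> cases bo <;>
        simp_all [Ord] <;> linarith [h]
    · intro hx i
      have h1 := hx (i, false)
      have h2 := hx (i, true)
      cases hσ : σ i <;> rw [hσ] at h1 h2 <;> simp_all [Ord] <;> linarith
  rw [key]
  exact isPolyhedron_of_fintype _ _

lemma stronglyConvex_cell (hA : ∀ v : Fin n → ℝ, (∀ i, A i v = 0) → v = 0)
    (σ : ι → Ordering) : StronglyConvex (cell A b σ) := by
  intro x v hv hline
  apply hv
  apply hA
  intro i
  by_contra hAv
  -- choose t with A i x + t * A i v = b i + s, s forcing contradiction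
  cases hσ : σ i with
  | lt =>
      have h := hline ((b i + 1 - A i x) / A i v) i
      rw [hσ] at h
      simp only [Ord, map_add, map_smul, smul_eq_mul] at h
      rw [div_mul_cancel₀ _ hAv] at h
      linarith
  | eq =>
      have h0 := hline 0 i
      have h1 := hline 1 i
      rw [hσ] at h0 h1
      simp only [Ord, map_add, map_smul, smul_eq_mul] at h0 h1
      apply hAv
      linarith
  | gt =>
      have h := hline ((b i - 1 - A i x) / A i v) i
      rw [hσ] at h
      simp only [Ord, map_add, map_smul, smul_eq_mul] at h
      rw [div_mul_cancel₀ _ hAv] at h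
      linarith

lemma isFaceOf_self {Q : Set (Fin n → ℝ)} : IsFaceOf Q Q := by
  refine ⟨0, 0, fun x _ => le_refl _, ?_⟩
  ext x; simp

lemma isFaceOf_empty_left {Q : Set (Fin n → ℝ)} : IsFaceOf ∅ Q := by
  refine ⟨0, 1, fun x _ => by norm_num, ?_⟩
  ext x; simp


/-- Choose a uniform small `ε` beating finitely many positive gaps. -/
lemma exists_eps {κ : Type} (s : Finset κ) (g h : κ → ℝ) (hh : ∀ i ∈ s, 0 < h i) :
    ∃ ε : ℝ, 0 < ε ∧ ∀ i ∈ s, ε * |g i| < h i := by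
  classical
  induction s using Finset.induction with
  | empty => exact ⟨1, one_pos, by simp⟩
  | @insert a s ha ih =>
      obtain ⟨ε, hε, hεs⟩ := ih (fun i hi => hh i (Finset.mem_insert_of_mem hi))
      have hha : 0 < h a := hh a (Finset.mem_insert_self a s)
      refine ⟨min ε (h a / (2 * (|g a| + 1))), ?_, ?_⟩
      · have : 0 < h a / (2 * (|g a| + 1)) := by positivity
        exact lt_min hε this
      · intro i hi
        rcases Finset.mem_insert.mp hi with rfl | hi
        · have h1 : min ε (h i / (2 * (|g i| + 1))) * |g i| ≤
              (h i / (2 * (|g i| + 1))) * |g i| :=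
            mul_le_mul_of_nonneg_right (min_le_right _ _) (abs_nonneg _)
          have h2 : (h i / (2 * (|g i| + 1))) * |g i| < h i := by
            rw [div_mul_eq_mul_div, div_lt_iff₀ (by positivity)]
            nlinarith [abs_nonneg (g i)]
          linarith
        · have h1 : min ε (h a / (2 * (|g a| + 1))) * |g i| ≤ ε * |g i| :=
            mul_le_mul_of_nonneg_right (min_le_left _ _) (abs_nonneg _)
          exact lt_of_le_of_lt h1 (hεs i hi)

/-- A convex set not contained in any of finitely many hyperplanes has a point
avoiding all of them. -/
lemma exists_avoid {κ : Type} (P : Set (Fin n → ℝ)) (hconv : Convex ℝ P)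
    (hne : P.Nonempty) (s : Finset κ) (g : κ → ((Fin n → ℝ) →ₗ[ℝ] ℝ)) (d : κ → ℝ)
    (hwit : ∀ i ∈ s, ∃ p ∈ P, g i p ≠ d i) :
    ∃ y ∈ P, ∀ i ∈ s, g i y ≠ d i := by
  classical
  induction s using Finset.induction with
  | empty => exact ⟨hne.choose, hne.choose_spec, by simp⟩
  | @insert a s ha ih =>
      obtain ⟨y, hyP, hys⟩ := ih (fun i hi => hwit i (Finset.mem_insert_of_mem hi))
      obtain ⟨p, hpP, hpa⟩ := hwit a (Finset.mem_insert_self a s)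
      by_cases hya : g a y ≠ d a
      · refine ⟨y, hyP, ?_⟩
        intro i hi
        rcases Finset.mem_insert.mp hi with rfl | hi
        · exact hya
        · exact hys i hi
      · push_neg at hya
        -- move from y towards p, avoiding the finitely many bad parameters
        have hbad : Set.Finite {t : ℝ | ∃ i ∈ s, g i (y + t • (p - y)) = d i} := by
          have hsub : {t : ℝ | ∃ i ∈ s, g i (y + t • (p - y)) = d i} ⊆
              ⋃ i ∈ (s : Set κ), {t : ℝ | g i (y + t • (p - y)) = d i} := by
            intro t ht
            obtain ⟨i, hi, h⟩ := ht
            exact Set.mem_biUnion hi h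
          refine Set.Finite.subset ?_ hsub
          apply Set.Finite.biUnion (Finset.finite_toSet s)
          intro i hi
          by_cases hz : g i (p - y) = 0
          · have hempty : {t : ℝ | g i (y + t • (p - y)) = d i} = ∅ := by
              ext t
              simp only [Set.mem_setOf_eq, map_add, map_smul, smul_eq_mul, hz,
                mul_zero, add_zero, Set.mem_empty_iff_false, iff_false]
              exact hys i (Finset.mem_coe.mp hi)
            rw [hempty]; exact Set.finite_empty
          · apply Set.Finite.subset (Set.finite_singleton ((d i - g i y) / g i (p - y)))
            intro t ht
            simp only [Set.mem_setOf_eq, map_add, map_smul, smul_eq_mul] at ht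
            rw [Set.mem_singleton_iff, eq_div_iff hz]
            linarith
        have hIoo : Set.Infinite (Set.Ioo (0:ℝ) 1) :=
          Set.infinite_coe_iff.mp (Set.Ioo.infinite one_pos)
        obtain ⟨t, htI, htbad⟩ :
            ∃ t ∈ Set.Ioo (0:ℝ) 1, t ∉ {t : ℝ | ∃ i ∈ s, g i (y + t • (p - y)) = d i} := by
          have := (hIoo.diff hbad).nonempty
          obtain ⟨t, ht⟩ := this
          exact ⟨t, ht.1, ht.2⟩
        refine ⟨y + t • (p - y), ?_, ?_⟩
        · have := hconv hyP hpP (by linarith [htI.1, htI.2] : (0:ℝ) ≤ 1 - t)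
            (le_of_lt htI.1) (by ring)
          convert this using 1
          module
        · intro i hi
          rcases Finset.mem_insert.mp hi with rfl | hi
          · intro h
            simp only [map_add, map_smul, smul_eq_mul, map_sub, hya] at h
            have h2 : t * (g i p - d i) = 0 := by linarith
            rcases mul_eq_zero.mp h2 with h' | h'
            · exact absurd h' (ne_of_gt htI.1)
            · exact hpa (by linarith)
          · intro h
            exact htbad ⟨i, hi, h⟩

lemma polyDim_mono {P Q : Set (Fin n → ℝ)} (h : P ⊆ Q) : polyDim P ≤ polyDim Q := by
  unfold polyDim
  apply Submodule.finrank_mono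
  exact AffineSubspace.direction_le (affineSpan_mono ℝ h)

/-- Every nonempty face of a cell is a cell. -/
lemma face_eq_cell (σ : ι → Ordering) (f : (Fin n → ℝ) →ₗ[ℝ] ℝ) (c : ℝ)
    (hb : ∀ x ∈ cell A b σ, f x ≤ c)
    (hFne : {x ∈ cell A b σ | f x = c}.Nonempty) :
    ∃ τ, {x ∈ cell A b σ | f x = c} = cell A b τ := by
  classical
  set F := {x ∈ cell A b σ | f x = c} with hF
  have hFsub : F ⊆ cell A b σ := fun x hx => hx.1
  have hFconv : Convex ℝ F := by
    have hFeq : F = cell A b σ ∩ {x | f x = c} := by ext x; simp [hF]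
    rw [hFeq]
    exact (convex_cell A b σ).inter (convex_hyperplane f.isLinear c)
  set τ : ι → Ordering := fun i => if ∀ w ∈ F, A i w = b i then .eq else σ i with hτ
  refine ⟨τ, ?_⟩
  set D : Finset ι := Finset.univ.filter (fun i => ¬ ∀ w ∈ F, A i w = b i) with hD
  have hDmem : ∀ i, i ∈ D ↔ ¬ ∀ w ∈ F, A i w = b i := by
    intro i; simp [hD]
  have hτD : ∀ i, i ∉ D → τ i = .eq ∧ ∀ w ∈ F, A i w = b i := by
    intro i hi
    rw [hDmem, not_not] at hi
    refine ⟨?_, hi⟩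
    simp only [hτ]
    exact if_pos hi
  have hτD' : ∀ i ∈ D, τ i = σ i := by
    intro i hi
    rw [hDmem] at hi
    simp [hτ, hi]
  have hσD : ∀ i ∈ D, σ i ≠ .eq := by
    intro i hi heq
    rw [hDmem] at hi
    exact hi (fun w hw => (heq ▸ hw.1 i : Ord .eq (A i w) (b i)))
  -- cell τ ⊆ cell σ
  have hτσ : cell A b τ ⊆ cell A b σ := by
    intro x hx i
    by_cases hi : i ∈ D
    · rw [← hτD' i hi]; exact hx i
    · have h := hx i
      rw [(hτD i hi).1] at h
      exact ord_of_eq _ h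
  -- F ⊆ cell τ
  apply Set.Subset.antisymm
  · intro x hx i
    by_cases hi : i ∈ D
    · rw [hτD' i hi]; exact hx.1 i
    · rw [(hτD i hi).1]
      exact (hτD i hi).2 x hx
  -- cell τ ⊆ F
  · intro x hx
    -- construct a point y of F strictly satisfying the D-constraints
    have hstr : ∃ y ∈ F, ∀ i ∈ D, A i y ≠ b i := by
      rcases Finset.eq_empty_or_nonempty D with hDe | hDne
      · exact ⟨hFne.choose, hFne.choose_spec, by simp [hDe]⟩
      · set z : ι → (Fin n → ℝ) := fun i =>
          if h : ∃ w ∈ F, A i w ≠ b i then h.choose else hFne.choose with hz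
        have hzF : ∀ i, z i ∈ F := by
          intro i
          by_cases h : ∃ w ∈ F, A i w ≠ b i
          · simp only [hz, dif_pos h]
            exact h.choose_spec.1
          · simp only [hz, dif_neg h]
            exact hFne.choose_spec
        have hzne : ∀ i ∈ D, A i (z i) ≠ b i := by
          intro i hi
          rw [hDmem] at hi
          push_neg at hi
          obtain ⟨w, hw, hwne⟩ := hi
          have hex : ∃ w ∈ F, A i w ≠ b i := ⟨w, hw, hwne⟩
          simp only [hz, dif_pos hex]
          exact hex.choose_spec.2
        set r : ℝ := ((D.card : ℝ))⁻¹ with hr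
        have hcard : (0:ℝ) < (D.card : ℝ) := by
          exact_mod_cast Finset.card_pos.mpr hDne
        have hrpos : 0 < r := inv_pos.mpr hcard
        have hsum : ∑ _i ∈ D, r = 1 := by
          rw [Finset.sum_const, nsmul_eq_mul, hr, mul_inv_cancel₀ (ne_of_gt hcard)]
        set y : Fin n → ℝ := ∑ i ∈ D, r • z i with hy
        have hyF : y ∈ F :=
          hFconv.sum_mem (fun i _ => le_of_lt hrpos) hsum (fun i _ => hzF i)
        refine ⟨y, hyF, ?_⟩
        intro j hj
        have hAy : A j y = ∑ i ∈ D, r * A j (z i) := by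
          rw [hy, map_sum]
          simp [smul_eq_mul]
        have hbj : ∑ _i ∈ D, r * b j = b j := by
          rw [Finset.sum_const, nsmul_eq_mul, ← mul_assoc, mul_comm (D.card:ℝ) r, hr,
            inv_mul_cancel₀ (ne_of_gt hcard), one_mul]
        cases hσj : σ j with
        | lt =>
            have hlt : A j y < b j := by
              rw [hAy, ← hbj]
              apply Finset.sum_lt_sum
              · intro i hi
                have := (hzF i).1 j
                rw [hσj] at this
                exact mul_le_mul_of_nonneg_left this (le_of_lt hrpos)
              · refine ⟨j, hj, ?_⟩
                have h1 := (hzF j).1 j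
                rw [hσj] at h1
                exact mul_lt_mul_of_pos_left (lt_of_le_of_ne h1 (hzne j hj)) hrpos
            exact ne_of_lt hlt
        | eq => exact absurd hσj (hσD j hj)
        | gt =>
            have hgt : b j < A j y := by
              rw [hAy, ← hbj]
              apply Finset.sum_lt_sum
              · intro i hi
                have := (hzF i).1 j
                rw [hσj] at this
                exact mul_le_mul_of_nonneg_left this (le_of_lt hrpos)
              · refine ⟨j, hj, ?_⟩
                have h1 := (hzF j).1 j
                rw [hσj] at h1
                exact mul_lt_mul_of_pos_left
                  (lt_of_le_of_ne h1 (fun h => hzne j hj h.symm)) hrpos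
            exact (ne_of_gt hgt)
    obtain ⟨y, hyF, hystr⟩ := hstr
    -- choose ε
    obtain ⟨ε, hεpos, hεlt⟩ := exists_eps D (fun i => A i (y - x)) (fun i => |A i y - b i|)
      (fun i hi => abs_pos.mpr (sub_ne_zero.mpr (hystr i hi)))
    set w : Fin n → ℝ := y + ε • (y - x) with hw
    have hAw : ∀ i, A i w = A i y + ε * (A i y - A i x) := by
      intro i; rw [hw]; simp [map_add, map_smul, map_sub, smul_eq_mul]
    have hwcell : w ∈ cell A b σ := by
      intro i
      by_cases hi : i ∈ D
      · have hAix := hεlt i hi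
        have hne := hystr i hi
        have hyσ := hyF.1 i
        cases hσi : σ i with
        | lt =>
            rw [hσi] at hyσ
            have hylt : A i y < b i := lt_of_le_of_ne hyσ hne
            have habs : |A i y - b i| = b i - A i y := by
              rw [abs_of_nonpos (by linarith)]; ring
            rw [habs] at hAix
            have : A i w ≤ A i y + ε * |A i (y - x)| := by
              rw [hAw i]
              have : A i y - A i x = A i (y - x) := by rw [map_sub]
              rw [this]
              have := le_abs_self (A i (y - x))
              nlinarith
            show A i w ≤ b i
            linarith
        | eq => exact absurd hσi (hσD i hi)
        | gt =>
            rw [hσi] at hyσ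
            have hygt : b i < A i y := lt_of_le_of_ne hyσ (fun h => hne h.symm)
            have habs : |A i y - b i| = A i y - b i := by
              rw [abs_of_nonneg (by linarith)]
            rw [habs] at hAix
            have : A i y - ε * |A i (y - x)| ≤ A i w := by
              rw [hAw i]
              have heq2 : A i y - A i x = A i (y - x) := by rw [map_sub]
              rw [heq2]
              have := neg_abs_le (A i (y - x))
              nlinarith
            show b i ≤ A i w
            linarith
      · have hAiy : A i y = b i := (hτD i hi).2 y hyF
        have hAix : A i x = b i := by
          have h := hx i
          rw [(hτD i hi).1] at h
          exact h
        apply ord_of_eq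
        rw [hAw i, hAiy, hAix]
        ring
    -- conclude
    have hfw := hb w hwcell
    have hfy : f y = c := hyF.2
    have hfweq : f w = c + ε * (c - f x) := by
      rw [hw]
      simp only [map_add, map_smul, map_sub, smul_eq_mul, hfy]
    rw [hfweq] at hfw
    have hfxle : f x ≤ c := hb x (hτσ hx)
    have : c ≤ f x := by nlinarith
    exact ⟨hτσ hx, le_antisymm hfxle this⟩

lemma sgn_bounds (o : Ordering) : -1 ≤ sgn o ∧ sgn o ≤ 1 := by
  cases o <;> norm_num [sgn]

lemma term_nonpos {o o' : Ordering} {a c : ℝ} (h : Ord o a c) :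
    (sgn o - sgn o') * (a - c) ≤ 0 := by
  cases o with
  | lt =>
      apply mul_nonpos_of_nonneg_of_nonpos
      · have h1 := (sgn_bounds o').2
        have h2 : sgn Ordering.lt = 1 := rfl
        linarith
      · simpa [sub_nonpos, Ord] using h
  | eq =>
      have : a - c = 0 := sub_eq_zero.mpr h
      rw [this, mul_zero]
  | gt =>
      apply mul_nonpos_of_nonpos_of_nonneg
      · have h1 := (sgn_bounds o').1
        have h2 : sgn Ordering.gt = -1 := rfl
        linarith
      · simpa [sub_nonneg, Ord] using h

/-- The intersection of two cells is a face of the first. -/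
lemma inter_isFace (σ τ : ι → Ordering) :
    IsFaceOf (cell A b σ ∩ cell A b τ) (cell A b σ) := by
  classical
  refine ⟨∑ i, (sgn (σ i) - sgn (τ i)) • A i, ∑ i, (sgn (σ i) - sgn (τ i)) * b i, ?_, ?_⟩
  · intro x hx
    rw [LinearMap.sum_apply]
    apply Finset.sum_le_sum
    intro i _
    rw [LinearMap.smul_apply, smul_eq_mul]
    nlinarith [term_nonpos (o' := τ i) (hx i)]
  · ext x
    simp only [Set.mem_inter_iff, Set.mem_setOf_eq, LinearMap.sum_apply,
      LinearMap.smul_apply, smul_eq_mul]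
    constructor
    · rintro ⟨hxσ, hxτ⟩
      refine ⟨hxσ, ?_⟩
      have : ∀ i, (sgn (σ i) - sgn (τ i)) * A i x = (sgn (σ i) - sgn (τ i)) * b i := by
        intro i
        by_cases hστ : σ i = τ i
        · rw [hστ, sub_self, zero_mul, zero_mul]
        · have : A i x = b i := eq_of_ord_ne hστ (hxσ i) (hxτ i)
          rw [this]
      exact Finset.sum_congr rfl (fun i _ => this i)
    · rintro ⟨hxσ, hsum⟩
      refine ⟨hxσ, ?_⟩
      have hzero : ∀ i ∈ Finset.univ, (sgn (σ i) - sgn (τ i)) * (A i x - b i) = 0 := by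
        rw [← Finset.sum_eq_zero_iff_of_nonpos
          (fun i _ => term_nonpos (o' := τ i) (hxσ i))]
        have : ∑ i, (sgn (σ i) - sgn (τ i)) * (A i x - b i)
            = ∑ i, (sgn (σ i) - sgn (τ i)) * A i x - ∑ i, (sgn (σ i) - sgn (τ i)) * b i := by
          rw [← Finset.sum_sub_distrib]
          apply Finset.sum_congr rfl
          intro i _
          ring
        rw [this, hsum, sub_self]
      intro i
      by_cases hστ : σ i = τ i
      · rw [← hστ]; exact hxσ i
      · have hcoeff : sgn (σ i) - sgn (τ i) ≠ 0 := by
          intro h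
          exact hστ (sgn_inj (by linarith [sub_eq_zero.mp h]))
        have := hzero i (Finset.mem_univ i)
        rcases mul_eq_zero.mp this with h | h
        · exact absurd h hcoeff
        · exact ord_of_eq _ (sub_eq_zero.mp h)

end Stmt12

instance : Fintype Ordering :=
  ⟨⟨{Ordering.lt, Ordering.eq, Ordering.gt}, by decide⟩, fun x => by cases x <;> decide⟩

set_option maxHeartbeats 1000000 in
open Stmt12 in
/-- every `k`-dimensional convex polyhedron `P ⊆ ℝⁿ` is a union of
`k`-dimensional cells of some finite polyhedral decomposition `Pd` of `ℝⁿ` (a finite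
covering of `ℝⁿ` by strongly convex polyhedra such that every face of a cell is a cell,
and the intersection of any two cells is a common face of both). -/
theorem stmt12 (n k : ℕ) (P : Set (Fin n → ℝ))
    (hP : IsPolyhedron P) (hPne : P.Nonempty) (hdim : polyDim P = k) :
    ∃ Pd : Set (Set (Fin n → ℝ)), Pd.Finite ∧
      (∀ Q ∈ Pd, IsPolyhedron Q ∧ StronglyConvex Q) ∧
      ⋃₀ Pd = Set.univ ∧
      (∀ Q ∈ Pd, ∀ F : Set (Fin n → ℝ), IsFaceOf F Q → F ∈ Pd) ∧
      (∀ Q ∈ Pd, ∀ Q' ∈ Pd, IsFaceOf (Q ∩ Q') Q ∧ IsFaceOf (Q ∩ Q') Q') ∧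
      (∃ S ⊆ Pd, (∀ Q ∈ S, polyDim Q = k) ∧ P = ⋃₀ S) := by
  classical
  obtain ⟨m, f₀, c₀, hPeq⟩ := hP
  set A : (Fin m ⊕ Fin n) → ((Fin n → ℝ) →ₗ[ℝ] ℝ) :=
    Sum.elim f₀ (fun j => LinearMap.proj j) with hA
  set b : (Fin m ⊕ Fin n) → ℝ := Sum.elim c₀ 0 with hb
  set Pd : Set (Set (Fin n → ℝ)) := insert ∅ (Set.range (cell A b)) with hPd
  have hPconv : Convex ℝ P := by
    rw [hPeq]
    intro x hx y hy s t hs ht hst i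
    have h := Stmt12.ord_combo (o := Ordering.lt) hs ht hst (hx i) (hy i)
    simpa [Stmt12.Ord, map_add, map_smul, smul_eq_mul] using h
  have hAcoord : ∀ v : Fin n → ℝ, (∀ i, A i v = 0) → v = 0 := by
    intro v hv
    funext j
    have := hv (Sum.inr j)
    simpa [hA] using this
  -- any cell at a point of P is contained in P
  have hcellP : ∀ z ∈ P, cell A b (sv A b z) ⊆ P := by
    intro z hz x hx
    rw [hPeq]
    intro i
    have hzi : f₀ i z ≤ c₀ i := by rw [hPeq] at hz; exact hz i
    have hxi := hx (Sum.inl i)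
    rcases lt_trichotomy (A (Sum.inl i) z) (b (Sum.inl i)) with h | h | h
    · rw [sv_eq_lt A b h] at hxi
      simpa [hA, hb, Stmt12.Ord] using (hxi : A (Sum.inl i) x ≤ b (Sum.inl i))
    · rw [sv_eq_eq A b h] at hxi
      have : A (Sum.inl i) x = b (Sum.inl i) := hxi
      simp only [hA, hb, Sum.elim_inl] at this
      exact le_of_eq this
    · exfalso
      simp only [hA, hb, Sum.elim_inl] at h
      linarith
  refine ⟨Pd, ?_, ?_, ?_, ?_, ?_, ?_⟩
  · exact Set.Finite.insert _ (Set.finite_range _)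
  · rintro Q hQ
    rcases hQ with rfl | ⟨σ, rfl⟩
    · refine ⟨isPolyhedron_empty, ?_⟩
      intro x v hv h
      exact h 0
    · exact ⟨isPolyhedron_cell A b σ, stronglyConvex_cell A b hAcoord σ⟩
  · ext x
    simp only [Set.mem_univ, iff_true, Set.mem_sUnion]
    exact ⟨cell A b (sv A b x), Or.inr ⟨sv A b x, rfl⟩, mem_cell_sv A b x⟩
  · rintro Q hQ F hF
    obtain ⟨f, c, hfb, hFeq⟩ := hF
    rcases hQ with rfl | ⟨σ, rfl⟩
    · left
      rw [hFeq]
      ext x; simp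
    · rcases Set.eq_empty_or_nonempty F with rfl | hFne
      · left; rfl
      · right
        rw [hFeq] at hFne ⊢
        obtain ⟨τ, hτ⟩ := face_eq_cell A b σ f c hfb hFne
        exact ⟨τ, hτ.symm⟩
  · rintro Q hQ Q' hQ'
    rcases hQ with rfl | ⟨σ, rfl⟩
    · rw [Set.empty_inter]
      exact ⟨isFaceOf_self, isFaceOf_empty_left⟩
    · rcases hQ' with rfl | ⟨τ, rfl⟩
      · rw [Set.inter_empty]
        exact ⟨isFaceOf_empty_left, isFaceOf_self⟩
      · exact ⟨inter_isFace A b σ τ, by rw [Set.inter_comm]; exact inter_isFace A b τ σ⟩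
  · -- the union of the k-dimensional cells inside P is P
    refine ⟨{Q | Q ∈ Pd ∧ Q ⊆ P ∧ polyDim Q = k}, fun Q hQ => hQ.1,
      fun Q hQ => hQ.2.2, ?_⟩
    apply Set.Subset.antisymm
    · -- the hard inclusion
      intro x hx
      -- a generic point y of P
      set G : Finset (Fin m ⊕ Fin n) :=
        Finset.univ.filter (fun i => ∃ p ∈ P, A i p ≠ b i) with hG
      obtain ⟨y, hyP, hyG⟩ := exists_avoid P hPconv hPne G A b
        (fun i hi => by simpa [hG] using (Finset.mem_filter.mp hi).2)
      set T : Finset (Fin m ⊕ Fin n) :=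
        Finset.univ.filter (fun i => A i x ≠ b i) with hT
      obtain ⟨t₀, ht₀pos, ht₀⟩ := exists_eps T (fun i => A i (y - x))
        (fun i => |A i x - b i|)
        (fun i hi => abs_pos.mpr (sub_ne_zero.mpr (by
          have := (Finset.mem_filter.mp hi).2; exact this)))
      set t : ℝ := min t₀ 1 with htdef
      have htpos : 0 < t := lt_min ht₀pos one_pos
      have ht1 : t ≤ 1 := min_le_right _ _
      set z : Fin n → ℝ := x + t • (y - x) with hz
      have hzP : z ∈ P := by
        have h := hPconv hx hyP (by linarith : (0:ℝ) ≤ 1 - t) (le_of_lt htpos)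
          (by ring)
        have heq : (1 - t) • x + t • y = z := by rw [hz]; module
        rwa [heq] at h
      have hAz : ∀ i, A i z = A i x + t * A i (y - x) := by
        intro i; rw [hz]; simp [map_add, map_smul, smul_eq_mul]
      have hsign : ∀ i ∈ T, t * |A i (y - x)| < |A i x - b i| := by
        intro i hi
        have h1 : t * |A i (y - x)| ≤ t₀ * |A i (y - x)| :=
          mul_le_mul_of_nonneg_right (min_le_left _ _) (abs_nonneg _)
        exact lt_of_le_of_lt h1 (ht₀ i hi)
      -- sign preservation on strict constraints
      have hpres : ∀ i ∈ T, (A i x < b i → A i z < b i) ∧ (b i < A i x → b i < A i z) := by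
        intro i hi
        have hs := hsign i hi
        have h1 : A i z - A i x ≤ t * |A i (y - x)| := by
          rw [hAz i]
          have := le_abs_self (A i (y - x))
          nlinarith
        have h2 : -(t * |A i (y - x)|) ≤ A i z - A i x := by
          rw [hAz i]
          have := neg_abs_le (A i (y - x))
          nlinarith
        constructor
        · intro hlt
          have : |A i x - b i| = b i - A i x := by rw [abs_of_neg (by linarith)]; ring
          rw [this] at hs
          linarith
        · intro hgt
          have : |A i x - b i| = A i x - b i := abs_of_pos (by linarith)
          rw [this] at hs
          linarith
      set τ : (Fin m ⊕ Fin n) → Ordering := sv A b z with hτ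
      have hzcell : z ∈ cell A b τ := mem_cell_sv A b z
      -- x belongs to the cell of z
      have hxcell : x ∈ cell A b τ := by
        intro i
        by_cases hxi : A i x = b i
        · exact ord_of_eq _ hxi
        · have hiT : i ∈ T := by simp [hT, hxi]
          rcases lt_or_gt_of_ne hxi with h | h
          · rw [hτ, sv_eq_lt A b ((hpres i hiT).1 h)]
            exact le_of_lt h
          · rw [hτ, sv_eq_gt A b ((hpres i hiT).2 h)]
            exact le_of_lt h
      have hcellsub : cell A b τ ⊆ P := hcellP z hzP
      -- constraints that are equalities on the cell vanish on the direction of P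
      have heqG : ∀ i, τ i = .eq → ∀ p ∈ P, A i p = b i := by
        intro i hτi
        have hzi : A i z = b i := (sv_eq_iff A b).mp hτi
        by_contra hcon
        push_neg at hcon
        obtain ⟨p, hpP, hpne⟩ := hcon
        have hiG : i ∈ G := by simp [hG]; exact ⟨p, hpP, hpne⟩
        have hyne : A i y ≠ b i := hyG i hiG
        by_cases hxi : A i x = b i
        · have hmap : A i z = A i x + t * (A i y - A i x) := by
            rw [hAz i, map_sub]
          rw [hxi] at hmap
          rw [hmap] at hzi
          have : t * (A i y - b i) = 0 := by linarith
          rcases mul_eq_zero.mp this with h | h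
          · exact absurd h (ne_of_gt htpos)
          · exact hyne (by linarith)
        · have hiT : i ∈ T := by simp [hT, hxi]
          rcases lt_or_gt_of_ne hxi with h | h
          · exact absurd hzi (ne_of_lt ((hpres i hiT).1 h))
          · exact absurd hzi (ne_of_gt ((hpres i hiT).2 h))
      have hVker : ∀ i, τ i = .eq →
          ∀ v ∈ (affineSpan ℝ P).direction, A i v = 0 := by
        intro i hτi v hv
        have hPker : ∀ p ∈ P, A i p = b i := heqG i hτi
        rw [direction_affineSpan] at hv
        have hle : vectorSpan ℝ P ≤ LinearMap.ker (A i) := by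
          rw [vectorSpan_def, Submodule.span_le]
          rintro u hu
          obtain ⟨p, hp, q, hq, rfl⟩ := hu
          simp only [SetLike.mem_coe, LinearMap.mem_ker, vsub_eq_sub, map_sub]
          rw [hPker p hp, hPker q hq, sub_self]
        exact LinearMap.mem_ker.mp (hle hv)
      -- the cell contains a neighborhood of z in every direction of P
      have hdir : (affineSpan ℝ P).direction ≤ (affineSpan ℝ (cell A b τ)).direction := by
        intro v hv
        obtain ⟨δ, hδpos, hδ⟩ := exists_eps
          (Finset.univ.filter (fun i => A i z ≠ b i)) (fun i => A i v)
          (fun i => |A i z - b i|)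
          (fun i hi => abs_pos.mpr (sub_ne_zero.mpr (by
            have := (Finset.mem_filter.mp hi).2; exact this)))
        have hwcell : z + δ • v ∈ cell A b τ := by
          intro i
          by_cases hzi : A i z = b i
          · have hτi : τ i = .eq := (sv_eq_iff A b).mpr hzi
            rw [hτi]
            have hv0 : A i v = 0 := hVker i hτi v hv
            show A i (z + δ • v) = b i
            simp [map_add, map_smul, smul_eq_mul, hv0, hzi]
          · have hiT : i ∈ Finset.univ.filter (fun i => A i z ≠ b i) := by simp [hzi]
            have hδi := hδ i hiT
            have hAw : A i (z + δ • v) = A i z + δ * A i v := by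
              simp [map_add, map_smul, smul_eq_mul]
            have h1 : A i (z + δ • v) ≤ A i z + δ * |A i v| := by
              rw [hAw]
              have := le_abs_self (A i v)
              nlinarith
            have h2 : A i z - δ * |A i v| ≤ A i (z + δ • v) := by
              rw [hAw]
              have := neg_abs_le (A i v)
              nlinarith
            rcases lt_or_gt_of_ne hzi with h | h
            · rw [hτ, sv_eq_lt A b h]
              have : |A i z - b i| = b i - A i z := by rw [abs_of_neg (by linarith)]; ring
              rw [this] at hδi
              show A i (z + δ • v) ≤ b i
              linarith
            · rw [hτ, sv_eq_gt A b h]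
              have : |A i z - b i| = A i z - b i := abs_of_pos (by linarith)
              rw [this] at hδi
              show b i ≤ A i (z + δ • v)
              linarith
        have hmem1 := mem_affineSpan ℝ hwcell
        have hmem2 := mem_affineSpan ℝ hzcell
        have hsub := AffineSubspace.vsub_mem_direction hmem1 hmem2
        have heq : (z + δ • v) -ᵥ z = δ • v := by
          rw [vsub_eq_sub]; abel
        rw [heq] at hsub
        have := Submodule.smul_mem _ δ⁻¹ hsub
        rwa [inv_smul_smul₀ (ne_of_gt hδpos)] at this
      have hdimcell : polyDim (cell A b τ) = k := by
        have hle : polyDim (cell A b τ) ≤ k := hdim ▸ polyDim_mono hcellsub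
        have hge : k ≤ polyDim (cell A b τ) := by
          have := Submodule.finrank_mono hdir
          unfold polyDim at hdim ⊢
          omega
        omega
      exact ⟨cell A b τ, ⟨Or.inr ⟨τ, rfl⟩, hcellsub, hdimcell⟩, hxcell⟩
    · intro x hx
      obtain ⟨Q, hQ, hxQ⟩ := hx
      exact hQ.2.1 hxQ
end
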